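/- Let 0 → M' → M → M'' → 0 be a short exact sequence of finitely generated Λ-modules, where Λ = O[[Γ]] with Γ ≅ Z_p. If M is free over Λ and M'' is finitely generated and free as an O-module, then M' is free over Λ. -/

import Mathlib

set_option maxHeartbeats 1000000

open PowerSeries

/-- Freeness criterion over `O⟦X⟧`. -/
theorem GV_key {O : Type*} [CommRing O] [IsDomain O] [IsDiscreteValuationRing O]
    {N : Type*} [AddCommGroup N] [Module (PowerSeries O) N] [Module.Finite (PowerSeries O) N]
    (hreg : ∀ m : N, (X : PowerSeries O) • m = 0 → m = 0)
    {ι : Type*} [Fintype ι] (v : ι → N)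
    (hgen : ∀ m : N, ∃ c : ι → PowerSeries O, ∃ m',
      m = (∑ i, c i • v i) + (X : PowerSeries O) • m')
    (hind : ∀ c : ι → PowerSeries O, (∃ m', (∑ i, c i • v i) = (X : PowerSeries O) • m') →
      ∀ i, (X : PowerSeries O) ∣ c i) :
    Module.Free (PowerSeries O) N := by
  classical
  let φ : (ι → PowerSeries O) →ₗ[PowerSeries O] N :=
    { toFun := fun c => ∑ i, c i • v i
      map_add' := by
        intro a b
        simp [add_smul, Finset.sum_add_distrib]
      map_smul' := by
        intro r a
        simp [smul_smul, Finset.smul_sum] }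
  have hφ : ∀ c : ι → PowerSeries O, φ c = ∑ i, c i • v i := fun _ => rfl
  have hsurj : Function.Surjective φ := by
    rw [← LinearMap.range_eq_top]
    have hjac : Ideal.span {(X : PowerSeries O)} ≤ Ideal.jacobson ⊥ := by
      rw [IsLocalRing.jacobson_eq_maximalIdeal ⊥ bot_ne_top]
      rw [Ideal.span_singleton_le_iff_mem, IsLocalRing.mem_maximalIdeal]
      intro hu
      have := hu.map (constantCoeff (R := O))
      simp at this
    have hle : (⊤ : Submodule (PowerSeries O) N) ≤
        LinearMap.range φ ⊔ Ideal.span {(X : PowerSeries O)} • ⊤ := by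
      intro m _
      obtain ⟨c, m', rfl⟩ := hgen m
      exact Submodule.add_mem_sup ⟨c, rfl⟩
        (Submodule.smul_mem_smul (Ideal.mem_span_singleton_self _) trivial)
    exact top_le_iff.mp (Submodule.le_of_le_smul_of_le_jacobson_bot
      (Module.Finite.fg_top (R := PowerSeries O) (M := N)) hjac hle)
  have hinj : Function.Injective φ := by
    have step : ∀ k, φ k = 0 → ∃ q, φ q = 0 ∧ k = (X : PowerSeries O) • q := by
      intro k hk
      have hd := hind k ⟨0, by rw [← hφ, hk]; simp⟩
      choose d hd using hd
      refine ⟨d, ?_, ?_⟩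
      · apply hreg
        have : φ ((X : PowerSeries O) • d) = 0 := by
          rw [show (X : PowerSeries O) • d = k from ?_, hk]
          funext i
          simp [hd i]
        rw [map_smul] at this
        exact this
      · funext i; simp [hd i]
    have hpow : ∀ n : ℕ, ∀ k, φ k = 0 → ∀ i, (X : PowerSeries O) ^ n ∣ k i := by
      intro n
      induction n with
      | zero => intro k _ i; simp
      | succ n ih =>
        intro k hk i
        obtain ⟨q, hq, rfl⟩ := step k hk
        obtain ⟨e, he⟩ := ih q hq i
        exact ⟨e, by simp [he, pow_succ, mul_comm, mul_assoc, mul_left_comm]⟩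
    rw [← LinearMap.ker_eq_bot]
    rw [eq_bot_iff]
    intro k hk
    have hk0 : φ k = 0 := hk
    have : k = 0 := by
      funext i
      ext n
      have := hpow (n + 1) k hk0 i
      rw [PowerSeries.X_pow_dvd_iff] at this
      simpa using this n (by omega)
    simp [this]
  letI : Module.Free (PowerSeries O) (ι → PowerSeries O) :=
    Module.Free.of_basis (Pi.basisFun (PowerSeries O) ι)
  exact Module.Free.of_equiv (LinearEquiv.ofBijective φ ⟨hinj, hsurj⟩)

/-- Let `0 → M' → M → M'' → 0` be a short exact sequence of finitely
generated modules over `Λ = O[[Γ]] ≅ O[[T]]` (`Γ ≅ ℤ_p`, `O` a complete DVR).  If `M` is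
free over `Λ` and `M''` is finitely generated and free as an `O`-module, then `M'` is
free over `Λ`. -/
theorem GV_free_kernel
    (O : Type*) [CommRing O] [IsDomain O] [IsDiscreteValuationRing O]
    (M' M M'' : Type*)
    [AddCommGroup M'] [Module (PowerSeries O) M'] [Module.Finite (PowerSeries O) M']
    [AddCommGroup M] [Module (PowerSeries O) M] [Module.Finite (PowerSeries O) M]
    [AddCommGroup M''] [Module (PowerSeries O) M''] [Module.Finite (PowerSeries O) M'']
    [Module O M''] [IsScalarTower O (PowerSeries O) M'']
    (f : M' →ₗ[PowerSeries O] M) (g : M →ₗ[PowerSeries O] M'')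
    (hf : Function.Injective f) (hg : Function.Surjective g)
    (hfg : LinearMap.range f = LinearMap.ker g)
    [Module.Free (PowerSeries O) M]
    [Module.Finite O M''] [Module.Free O M''] :
    Module.Free (PowerSeries O) M' := by
  classical
  letI : Module O M := Module.compHom M (algebraMap O (PowerSeries O))
  letI : Module O M' := Module.compHom M' (algebraMap O (PowerSeries O))
  haveI : IsScalarTower O (PowerSeries O) M :=
    IsScalarTower.of_algebraMap_smul fun r x => rfl
  haveI : IsScalarTower O (PowerSeries O) M' :=
    IsScalarTower.of_algebraMap_smul fun r x => rfl
  have hgf : ∀ p : M', g (f p) = 0 := by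
    intro p
    have : f p ∈ LinearMap.ker g := hfg ▸ LinearMap.mem_range_self f p
    exact this
  -- basis of M
  set ι := Module.Free.ChooseBasisIndex (PowerSeries O) M with hι
  set b : Module.Basis ι (PowerSeries O) M := Module.Free.chooseBasis _ _ with hb
  -- reduction of M mod X
  have hrepr_smul : ∀ (r : PowerSeries O) (m : M) (i : ι),
      b.repr (r • m) i = r * b.repr m i := by
    intro r m i; rw [map_smul]; rfl
  let π0 : M →ₗ[O] (ι → O) :=
    { toFun := fun m i => constantCoeff (R := O) (b.repr m i)
      map_add' := by intro x y; funext i; simp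
      map_smul' := by
        intro a m
        funext i
        show constantCoeff (R := O) (b.repr ((algebraMap O (PowerSeries O) a) • m) i) = _
        rw [hrepr_smul, map_mul]
        simp [PowerSeries.algebraMap_apply] }
  have hπ0 : ∀ (m : M) (i : ι), π0 m i = constantCoeff (R := O) (b.repr m i) := fun _ _ => rfl
  have hπr : ∀ (r : PowerSeries O) (m : M),
      π0 (r • m) = constantCoeff (R := O) r • π0 m := by
    intro r m
    funext i
    rw [hπ0, hrepr_smul, map_mul]
    rfl
  have hπX : ∀ m : M, π0 ((X : PowerSeries O) • m) = 0 := by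
    intro m
    rw [hπr]
    simp
  have hX0 : ∀ m : M, π0 m = 0 → ∃ m₀ : M, m = (X : PowerSeries O) • m₀ := by
    intro m hm
    have hdvd : ∀ i, (X : PowerSeries O) ∣ b.repr m i := by
      intro i
      rw [PowerSeries.X_dvd_iff]
      exact congrFun hm i
    choose r hr using hdvd
    refine ⟨∑ i, r i • b i, ?_⟩
    rw [Finset.smul_sum]
    have hsum := b.sum_equivFun m
    calc m = ∑ i, b.equivFun m i • b i := hsum.symm
    _ = ∑ i, (X : PowerSeries O) • r i • b i := by
        refine Finset.sum_congr rfl fun i _ => ?_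
        rw [smul_smul, Module.Basis.equivFun_apply, hr i]
  -- X is regular on M and M'
  have hregM : ∀ m : M, (X : PowerSeries O) • m = 0 → m = 0 := by
    intro m hm
    have h0 : b.repr ((X : PowerSeries O) • m) = 0 := by rw [hm, map_zero]
    have : b.repr m = 0 := by
      refine Finsupp.ext fun i => ?_
      have h2 := DFunLike.congr_fun h0 i
      rw [hrepr_smul] at h2
      simp only [Finsupp.coe_zero, Pi.zero_apply] at h2 ⊢
      rcases mul_eq_zero.mp h2 with h | h
      · exact absurd h PowerSeries.X_ne_zero
      · exact h
    simpa using congrArg b.repr.symm this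
  have hregM' : ∀ p : M', (X : PowerSeries O) • p = 0 → p = 0 := by
    intro p hp
    apply hf
    rw [map_zero]
    apply hregM
    rw [← map_smul, hp, map_zero]
  -- the image of M' in M/X
  let Φ : M' →ₗ[O] (ι → O) := π0 ∘ₗ (f.restrictScalars O)
  have hΦ : ∀ p : M', Φ p = π0 (f p) := fun _ => rfl
  obtain ⟨t, u⟩ := Submodule.basisOfPid (Pi.basisFun O ι) (LinearMap.range Φ)
  set U := LinearMap.range Φ
  -- the X-torsion of M''
  let ξ : M'' →ₗ[O] M'' :=
    { toFun := fun m => (X : PowerSeries O) • m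
      map_add' := fun x y => smul_add _ x y
      map_smul' := fun a m => by
        show (X : PowerSeries O) • (a • m) = a • ((X : PowerSeries O) • m)
        exact (smul_comm a _ m).symm }
  obtain ⟨s, w⟩ := Submodule.basisOfPid (Module.Free.chooseBasis O M'') (LinearMap.ker ξ)
  set W := LinearMap.ker ξ
  have hW : ∀ y : W, (X : PowerSeries O) • (y : M'') = 0 := fun y => y.2
  -- choices of lifts
  have hu' : ∀ j, ∃ p : M', Φ p = (u j : ι → O) := fun j => (u j).2
  choose pL hpL using hu'
  have hmw' : ∀ l, ∃ m : M, g m = ((w l : W) : M'') := fun l => hg _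
  choose mw hmw using hmw'
  have hδ' : ∀ l, ∃ p : M', f p = (X : PowerSeries O) • mw l := by
    intro l
    have : (X : PowerSeries O) • mw l ∈ LinearMap.ker g := by
      rw [LinearMap.mem_ker, map_smul, hmw l]
      exact hW (w l)
    rw [← hfg] at this
    exact this
  choose δ hδ using hδ'
  -- linear independence of the coerced bases
  have hulin := Fintype.linearIndependent_iff.mp
    (u.linearIndependent.map' U.subtype (Submodule.ker_subtype U))
  have hwlin := Fintype.linearIndependent_iff.mp
    (w.linearIndependent.map' W.subtype (Submodule.ker_subtype W))
  -- the candidate generating family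
  set v : Fin s ⊕ Fin t → M' := Sum.elim δ pL with hv
  apply GV_key hregM' v
  · -- generation
    intro p
    have hmem : Φ p ∈ U := ⟨p, rfl⟩
    set a : Fin t → O := u.equivFun ⟨Φ p, hmem⟩ with haa
    have ha : Φ p = ∑ j, a j • (u j : ι → O) := by
      have h1 := u.sum_equivFun ⟨Φ p, hmem⟩
      have h2 := congrArg (fun z : U => (z : ι → O)) h1
      simpa only [Submodule.coe_sum, Submodule.coe_smul, Submodule.coe_mk] using h2.symm
    set q : M' := p - ∑ j, a j • pL j with hq
    have hΦq : π0 (f q) = 0 := by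
      rw [← hΦ, hq, map_sub, map_sum]
      simp only [map_smul, hpL]
      rw [ha]
      simp
    obtain ⟨m₀, hm₀⟩ := hX0 (f q) hΦq
    have hWg : g m₀ ∈ W := by
      show (X : PowerSeries O) • g m₀ = 0
      rw [← map_smul, ← hm₀, hgf]
    set e : Fin s → O := w.equivFun ⟨g m₀, hWg⟩ with hee
    have he : g m₀ = ∑ l, e l • ((w l : W) : M'') := by
      have h1 := w.sum_equivFun ⟨g m₀, hWg⟩
      have h2 := congrArg (fun z : W => (z : M'')) h1
      simpa only [Submodule.coe_sum, Submodule.coe_smul, Submodule.coe_mk] using h2.symm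
    have hker : m₀ - ∑ l, e l • mw l ∈ LinearMap.ker g := by
      rw [LinearMap.mem_ker, map_sub, map_sum]
      rw [he]
      refine sub_eq_zero_of_eq (Finset.sum_congr rfl fun l _ => ?_)
      rw [LinearMap.map_smul_of_tower, hmw]
    rw [← hfg] at hker
    obtain ⟨p₁, hp₁⟩ := hker
    have key : f ((X : PowerSeries O) • p₁ + ∑ l, e l • δ l) = f q := by
      calc f ((X : PowerSeries O) • p₁ + ∑ l, e l • δ l)
          = (X : PowerSeries O) • (m₀ - ∑ l, e l • mw l)
            + ∑ l, e l • ((X : PowerSeries O) • mw l) := by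
            rw [map_add, map_smul, hp₁, map_sum]
            congr 1
            exact Finset.sum_congr rfl fun l _ => by
              rw [LinearMap.map_smul_of_tower, hδ]
        _ = (X : PowerSeries O) • m₀ := by
            rw [smul_sub, Finset.smul_sum]
            rw [Finset.sum_congr rfl fun l _ =>
              (smul_comm (X : PowerSeries O) (e l) (mw l))]
            abel
        _ = f q := hm₀.symm
    have hq' : q = (X : PowerSeries O) • p₁ + ∑ l, e l • δ l := (hf key).symm
    refine ⟨Sum.elim (fun l => algebraMap O (PowerSeries O) (e l))
      (fun j => algebraMap O (PowerSeries O) (a j)), p₁, ?_⟩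
    rw [Fintype.sum_sum_type]
    simp only [hv, Sum.elim_inl, Sum.elim_inr, algebraMap_smul]
    have : p = q + ∑ j, a j • pL j := by rw [hq]; abel
    rw [this, hq']
    abel
  · -- independence
    intro c ⟨p₂, hc⟩
    have hsum : ∑ i, c i • v i
        = ∑ l, c (Sum.inl l) • δ l + ∑ j, c (Sum.inr j) • pL j := by
      rw [Fintype.sum_sum_type]
      simp [hv]
    -- step 1 : constant coefficients of the `inr` part vanish
    have h1 : ∑ j, constantCoeff (R := O) (c (Sum.inr j)) • ((u j : U) : ι → O) = 0 := by
      have h2 : π0 (f (∑ l, c (Sum.inl l) • δ l + ∑ j, c (Sum.inr j) • pL j))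
          = π0 (f ((X : PowerSeries O) • p₂)) := by
        rw [← hsum]
        exact congrArg (fun z : M' => π0 (f z)) hc
      simp only [map_add, map_sum, map_smul] at h2
      rw [hπX] at h2
      have e1 : ∀ l, π0 (c (Sum.inl l) • f (δ l)) = 0 := by
        intro l
        rw [hδ l, hπr, hπX, smul_zero]
      have e2 : ∀ j, π0 (c (Sum.inr j) • f (pL j))
          = constantCoeff (R := O) (c (Sum.inr j)) • ((u j : U) : ι → O) := by
        intro j
        rw [hπr]
        congr 1
        rw [← hΦ, hpL]
      rw [Finset.sum_congr rfl fun l _ => e1 l,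
        Finset.sum_congr rfl fun j _ => e2 j] at h2
      simpa using h2
    have hj0 : ∀ j, constantCoeff (R := O) (c (Sum.inr j)) = 0 := fun j => hulin _ h1 j
    have hjdvd : ∀ j, (X : PowerSeries O) ∣ c (Sum.inr j) := by
      intro j
      rw [PowerSeries.X_dvd_iff]
      exact hj0 j
    choose d hd using hjdvd
    -- step 2 : an auxiliary element of M killed by X
    set F : M := (∑ l, c (Sum.inl l) • mw l + ∑ j, d j • f (pL j)) - f p₂ with hF
    have hXF : (X : PowerSeries O) • F = 0 := by
      rw [hF, smul_sub, smul_add, Finset.smul_sum, Finset.smul_sum]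
      have e1 : ∀ l, (X : PowerSeries O) • c (Sum.inl l) • mw l
          = c (Sum.inl l) • f (δ l) := by
        intro l
        rw [hδ, smul_comm]
      have e2 : ∀ j, (X : PowerSeries O) • d j • f (pL j)
          = c (Sum.inr j) • f (pL j) := by
        intro j
        rw [smul_smul, ← hd j]
      rw [Finset.sum_congr rfl fun l _ => e1 l, Finset.sum_congr rfl fun j _ => e2 j]
      rw [← map_smul, ← hc, hsum, map_add, map_sum, map_sum]
      simp only [map_smul]
      abel
    have hF0 : F = 0 := hregM F hXF
    -- step 3 : applying g
    have h3 : ∑ l, c (Sum.inl l) • ((w l : W) : M'') = 0 := by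
      have := congrArg g hF0
      rw [hF, map_zero, map_sub, map_add, map_sum, map_sum] at this
      simp only [map_smul, hmw, hgf] at this
      simpa using this
    have h4 : ∑ l, constantCoeff (R := O) (c (Sum.inl l)) • ((w l : W) : M'') = 0 := by
      rw [← h3]
      refine Finset.sum_congr rfl fun l _ => ?_
      obtain ⟨ee, hee⟩ : (X : PowerSeries O) ∣
          (c (Sum.inl l) - PowerSeries.C (R := O) (constantCoeff (R := O) (c (Sum.inl l)))) := by
        rw [PowerSeries.X_dvd_iff]
        simp
      have hsplit : c (Sum.inl l) = PowerSeries.C (R := O) (constantCoeff (R := O) (c (Sum.inl l)))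
          + (X : PowerSeries O) * ee := by
        rw [← hee]; ring
      have hterm : c (Sum.inl l) • ((w l : W) : M'')
          = constantCoeff (R := O) (c (Sum.inl l)) • ((w l : W) : M'') := by
        conv_lhs => rw [hsplit]
        rw [add_smul, mul_comm, mul_smul, hW, smul_zero, add_zero,
          PowerSeries.C_eq_algebraMap, algebraMap_smul]
      exact hterm.symm
    have hl0 : ∀ l, constantCoeff (R := O) (c (Sum.inl l)) = 0 := fun l => hwlin _ h4 l
    intro i
    rcases i with l | j
    · rw [PowerSeries.X_dvd_iff]
      exact hl0 l
    · exact ⟨d j, hd j⟩
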